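/- Let λ > 0, let n be a real number with n ≠ 2, let c₁, c₂ ∈ ℝ, and let J ⊆ (0,∞) be a nonempty open interval with λν ≠ 1 for all ν ∈ J. Define E(ν) = (1/λ)·log(λν), f(ν) = c₁ + c₂(λν)^{−n}, and g(ν) = (n/(n−2))·(1/λ)·(c₁ + c₂(λν)^{2−n}). Then E′(ν)² ≠ 1 on J and (f, g) satisfies for all ν ∈ J: f′(ν) = nE′(ν)E″(ν)/(E′(ν)²−1) · f(ν) − (n−2)E″(ν)/(ν(E′(ν)²−1)) · g(ν) and g′(ν) = nνE″(ν)/(E′(ν)²−1) · f(ν) − (n−2)(E′(ν)²−1+νE′(ν)E″(ν))/(ν(E′(ν)²−1)) · g(ν). -/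

import Mathlib

/-- The non-analytic logarithmic solution (A.7): for `E(ν) = (1/λ)log(λν)`,
the functions `f(ν) = c₁ + c₂(λν)^{−n}` and
`g(ν) = (n/(n−2))(1/λ)(c₁ + c₂(λν)^{2−n})` solve the spin-`n` current
system in normal form. -/
theorem stmt14 (lam : ℝ) (hlam : 0 < lam) (n : ℝ) (hn : n ≠ 2) (c₁ c₂ : ℝ)
    (J : Set ℝ) (hJss : J ⊆ Set.Ioi (0 : ℝ)) (hJopen : IsOpen J)
    (hJconn : J.OrdConnected) (hJne : J.Nonempty)
    (hJ1 : ∀ ν ∈ J, lam * ν ≠ 1)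
    (E f g : ℝ → ℝ)
    (hEdef : E = fun ν => (1 / lam) * Real.log (lam * ν))
    (hfdef : f = fun ν => c₁ + c₂ * (lam * ν) ^ (-n))
    (hgdef : g = fun ν =>
      (n / (n - 2)) * (1 / lam) * (c₁ + c₂ * (lam * ν) ^ (2 - n))) :
    ∀ ν ∈ J,
      (deriv E ν) ^ 2 ≠ 1 ∧
      deriv f ν =
        n * deriv E ν * deriv (deriv E) ν / ((deriv E ν) ^ 2 - 1) * f ν
          - (n - 2) * deriv (deriv E) ν / (ν * ((deriv E ν) ^ 2 - 1)) * g ν ∧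
      deriv g ν =
        n * ν * deriv (deriv E) ν / ((deriv E ν) ^ 2 - 1) * f ν
          - (n - 2) * ((deriv E ν) ^ 2 - 1 + ν * deriv E ν * deriv (deriv E) ν)
              / (ν * ((deriv E ν) ^ 2 - 1)) * g ν := by
  intro ν hν
  have hν0 : (0:ℝ) < ν := hJss hν
  have hlam0 : lam ≠ 0 := ne_of_gt hlam
  have hu : (0:ℝ) < lam * ν := mul_pos hlam hν0
  have hu0 : lam * ν ≠ 0 := ne_of_gt hu
  have hu1 : lam * ν ≠ 1 := hJ1 ν hν
  -- derivative of E on the positive reals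
  have hE' : ∀ x ∈ Set.Ioi (0:ℝ), deriv E x = (lam * x)⁻¹ := by
    intro x hx
    have hx0 : (0:ℝ) < x := hx
    have hmx : (0:ℝ) < lam * x := mul_pos hlam hx0
    have hmul : HasDerivAt (fun y : ℝ => lam * y) lam x := by
      simpa using (hasDerivAt_id x).const_mul lam
    have hlog : HasDerivAt (fun y : ℝ => Real.log (lam * y)) ((lam * x)⁻¹ * lam) x :=
      (Real.hasDerivAt_log (ne_of_gt hmx)).comp x hmul
    have hE : HasDerivAt E ((1 / lam) * ((lam * x)⁻¹ * lam)) x := by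
      rw [hEdef]; exact hlog.const_mul (1 / lam)
    have := hE.deriv
    rw [this]
    field_simp
  have hEν : deriv E ν = (lam * ν)⁻¹ := hE' ν hν0
  -- second derivative of E
  have hE'' : deriv (deriv E) ν = -lam / (lam * ν) ^ 2 := by
    have heq : deriv E =ᶠ[nhds ν] fun x => (lam * x)⁻¹ := by
      filter_upwards [isOpen_Ioi.mem_nhds hν0] with x hx using hE' x hx
    rw [heq.deriv_eq]
    have hmul : HasDerivAt (fun y : ℝ => lam * y) lam ν := by
      simpa using (hasDerivAt_id ν).const_mul lam
    have := (hmul.inv hu0).deriv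
    exact this
  -- derivative of f
  have hmulν : HasDerivAt (fun y : ℝ => lam * y) lam ν := by
    simpa using (hasDerivAt_id ν).const_mul lam
  have hf' : deriv f ν = c₂ * (lam * (-n) * (lam * ν) ^ (-n - 1)) := by
    have h1 : HasDerivAt (fun y : ℝ => (lam * y) ^ (-n))
        (lam * (-n) * (lam * ν) ^ (-n - 1)) ν :=
      hmulν.rpow_const (Or.inl hu0)
    have h2 : HasDerivAt f (c₂ * (lam * (-n) * (lam * ν) ^ (-n - 1))) ν := by
      rw [hfdef]; exact (h1.const_mul c₂).const_add c₁
    exact h2.deriv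
  -- derivative of g
  have hg' : deriv g ν =
      (n / (n - 2)) * (1 / lam) * (c₂ * (lam * (2 - n) * (lam * ν) ^ (2 - n - 1))) := by
    have h1 : HasDerivAt (fun y : ℝ => (lam * y) ^ (2 - n))
        (lam * (2 - n) * (lam * ν) ^ (2 - n - 1)) ν :=
      hmulν.rpow_const (Or.inl hu0)
    have h2 : HasDerivAt g
        ((n / (n - 2)) * (1 / lam) * (c₂ * (lam * (2 - n) * (lam * ν) ^ (2 - n - 1)))) ν := by
      rw [hgdef]
      exact ((h1.const_mul c₂).const_add c₁).const_mul ((n / (n - 2)) * (1 / lam))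
    exact h2.deriv
  -- nonvanishing of a² - 1
  have ha2 : (lam * ν) ^ 2 ≠ 1 := by
    intro h
    have h1 : (lam * ν - 1) * (lam * ν + 1) = 0 := by linear_combination h
    rcases mul_eq_zero.1 h1 with h2 | h2
    · exact hu1 (by linarith)
    · linarith
  have hden : ((lam * ν)⁻¹) ^ 2 - 1 ≠ 0 := by
    intro h
    apply ha2
    field_simp at h
    linarith [h]
  -- rpow identities
  have hr1 : (lam * ν) ^ (-n - 1) = (lam * ν) ^ (-n) * (lam * ν)⁻¹ := by
    rw [Real.rpow_sub hu, Real.rpow_one]; ring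
  have hr2 : (lam * ν) ^ (2 - n) = (lam * ν) ^ 2 * (lam * ν) ^ (-n) := by
    rw [show (2 : ℝ) - n = 2 + (-n) by ring, Real.rpow_add hu]
    rw [show ((lam*ν) ^ (2:ℝ)) = (lam*ν) ^ (2:ℕ) by rw [← Real.rpow_natCast]; norm_num]
  have hr3 : (lam * ν) ^ (2 - n - 1) = (lam * ν) * (lam * ν) ^ (-n) := by
    rw [show (2 : ℝ) - n - 1 = 1 + (-n) by ring, Real.rpow_add hu, Real.rpow_one]
  have hn2 : n - 2 ≠ 0 := sub_ne_zero.2 hn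
  have h12 : 1 - (lam * ν) ^ 2 ≠ 0 := fun h => ha2 (by linarith)
  have hA : ((lam * ν)⁻¹) ^ 2 - 1 = (1 - (lam * ν) ^ 2) / (lam * ν) ^ 2 := by
    field_simp
  refine ⟨by rw [hEν]; exact fun h => hden (by linarith), ?_, ?_⟩
  · rw [hf', hEν, hE'', hfdef, hgdef]
    simp only [hr1, hr2, hr3]
    rw [hA]
    field_simp [h12, hν0.ne', show 1 - lam ^ 2 * ν ^ 2 ≠ 0 by rw [← mul_pow]; exact h12]
    ring
  · rw [hg', hEν, hE'', hfdef, hgdef]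
    simp only [hr1, hr2, hr3]
    rw [hA]
    field_simp [h12, hν0.ne', show 1 - lam ^ 2 * ν ^ 2 ≠ 0 by rw [← mul_pow]; exact h12]
    ring
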